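/- If the clique-variant cross-composition graph G'(S) has an induced matching with at least k = n + |𝒞| - n/3 + 1 edges, then it has an induced matching with the same number of edges that saturates the vertex q. -/

import Mathlib

open SimpleGraph
set_option maxHeartbeats 1000000

/-- `M` is a matching of `G`, viewed as a set of edges. -/
def MatchingEdges {V : Type*} (G : SimpleGraph V) (M : Set (Sym2 V)) : Prop :=
  M ⊆ G.edgeSet ∧ ∀ e ∈ M, ∀ f ∈ M, e ≠ f → ∀ v : V, v ∈ e → v ∉ f

/-- The set of `M`-saturated vertices. -/
def msat {V : Type*} (M : Set (Sym2 V)) : Set V := {v | ∃ e ∈ M, v ∈ e}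

/-- `M` is an induced matching of `G`. -/
def InducedMatchingEdges {V : Type*} (G : SimpleGraph V) (M : Set (Sym2 V)) : Prop :=
  MatchingEdges G M ∧
    ∀ u v : V, u ∈ msat M → v ∈ msat M → G.Adj u v → s(u, v) ∈ M

/-- The union `𝒞` of the families `C 1, ..., C t`. -/
def allSets (n t : ℕ) (C : Fin t → Finset (Finset (Fin n))) : Finset (Finset (Fin n)) :=
  Finset.univ.biUnion C

/-- Vertex type of the cross-composition graph: `Sum.inl a` is `v_a`;
`Sum.inr (Sum.inl (S, 0))` is the star center `w_S` and `Sum.inr (Sum.inl (S, 1))` is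
the leaf `w_S^*`; `Sum.inr (Sum.inr (Sum.inl ⟨S, x⟩))` is the interface vertex `w_{S,x}`
(for `x ∈ S`); `Sum.inr (Sum.inr (Sum.inr none))` is `q` and
`Sum.inr (Sum.inr (Sum.inr (some i)))` is `p_i`. -/
abbrev CCVert (n t : ℕ) (C : Fin t → Finset (Finset (Fin n))) : Type _ :=
  Fin n ⊕ (({S // S ∈ allSets n t C} × Fin 2) ⊕
    ((Σ S : {S // S ∈ allSets n t C}, {x : Fin n // x ∈ S.val}) ⊕ Option (Fin t)))

/-- The clique-variant cross-composition graph `G'(S)`: like `G(S)` but the vertices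
`q, p_1, ..., p_t` form a clique. -/
def CCGraph' (n t : ℕ) (C : Fin t → Finset (Finset (Fin n))) :
    SimpleGraph (CCVert n t C) :=
  SimpleGraph.fromRel (fun a b =>
    match a, b with
    -- v_a ~ w_{S,x} iff x = a
    | Sum.inl a, Sum.inr (Sum.inr (Sum.inl ⟨_, x⟩)) => (x : Fin n) = a
    -- w_S ~ w_S^*
    | Sum.inr (Sum.inl (S, _)), Sum.inr (Sum.inl (S', _)) => S = S'
    -- w_S ~ w_{S,x}
    | Sum.inr (Sum.inl (S, i)), Sum.inr (Sum.inr (Sum.inl ⟨S', _⟩)) => S = S' ∧ i = 0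
    -- {q, p_1, ..., p_t} is a clique
    | Sum.inr (Sum.inr (Sum.inr _)), Sum.inr (Sum.inr (Sum.inr _)) => True
    -- p_i ~ w_{S,x} iff S ∉ C i
    | Sum.inr (Sum.inr (Sum.inr (some i))), Sum.inr (Sum.inr (Sum.inl ⟨S, _⟩)) =>
        (S : Finset (Fin n)) ∉ C i
    | _, _ => False)


section Aux

variable {n t : ℕ} {C : Fin t → Finset (Finset (Fin n))}

private abbrev wIV (Sx : Σ S : {S // S ∈ allSets n t C}, {x : Fin n // x ∈ S.val}) :
    CCVert n t C := Sum.inr (Sum.inr (Sum.inl Sx))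

private abbrev wCV (S : {S // S ∈ allSets n t C}) : CCVert n t C :=
  Sum.inr (Sum.inl (S, 0))

private abbrev cvV (o : Option (Fin t)) : CCVert n t C := Sum.inr (Sum.inr (Sum.inr o))

private lemma edge_classify {e : Sym2 (CCVert n t C)}
    (he : e ∈ (CCGraph' n t C).edgeSet) :
    (∃ Sx : Σ S : {S // S ∈ allSets n t C}, {x : Fin n // x ∈ S.val},
        e = s(Sum.inl Sx.2.val, wIV Sx)) ∨
    (∃ (S : {S // S ∈ allSets n t C}) (i j : Fin 2), i ≠ j ∧
        e = s(Sum.inr (Sum.inl (S, i)), Sum.inr (Sum.inl (S, j)))) ∨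
    (∃ Sx : Σ S : {S // S ∈ allSets n t C}, {x : Fin n // x ∈ S.val},
        e = s(wCV Sx.1, wIV Sx)) ∨
    (∃ o o' : Option (Fin t), o ≠ o' ∧ e = s(cvV o, cvV o')) ∨
    (∃ (i : Fin t) (Sx : Σ S : {S // S ∈ allSets n t C}, {x : Fin n // x ∈ S.val}),
        e = s(cvV (some i), wIV Sx)) := by
  induction e with
  | _ u v =>
    rw [SimpleGraph.mem_edgeSet] at he
    rw [CCGraph', SimpleGraph.fromRel_adj] at he
    obtain ⟨hne, h⟩ := he
    rcases u with a | ⟨S, i⟩ | ⟨S, x⟩ | (_ | i) <;>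
      rcases v with a' | ⟨S', i'⟩ | ⟨S', x'⟩ | (_ | i') <;>
      simp only [false_or, or_false, or_self] at h <;> try exact h.elim
    · -- inl a, wIV ⟨S', x'⟩ : x' = a
      exact Or.inl ⟨⟨S', x'⟩, by rw [h]⟩
    · -- pair pair
      have hSS : S = S' := by rcases h with h | h; exact h; exact h.symm
      subst hSS
      have hii : i ≠ i' := by
        intro hii; subst hii; exact hne rfl
      exact Or.inr (Or.inl ⟨S, i, i', hii, rfl⟩)
    · -- pair (S,i), wIV ⟨S',x'⟩
      obtain ⟨hSS, hi0⟩ := h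
      subst hSS; subst hi0
      exact Or.inr (Or.inr (Or.inl ⟨⟨S, x'⟩, rfl⟩))
    · -- wIV ⟨S,x⟩, inl a'
      exact Or.inl ⟨⟨S, x⟩, by rw [h, Sym2.eq_swap]⟩
    · -- wIV ⟨S,x⟩, pair (S',i')
      obtain ⟨hSS, hi0⟩ := h
      subst hSS; subst hi0
      exact Or.inr (Or.inr (Or.inl ⟨⟨S', x⟩, Sym2.eq_swap⟩))
    · -- wIV, cv (some i')
      exact Or.inr (Or.inr (Or.inr (Or.inr ⟨i', ⟨S, x⟩, Sym2.eq_swap⟩)))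
    · -- cv none, cv none : hne kills
      exact absurd rfl hne
    · exact Or.inr (Or.inr (Or.inr (Or.inl ⟨none, some i', by simp, rfl⟩)))
    · -- cv some i, wIV
      exact Or.inr (Or.inr (Or.inr (Or.inr ⟨i, ⟨S', x'⟩, rfl⟩)))
    · exact Or.inr (Or.inr (Or.inr (Or.inl ⟨some i, none, by simp, rfl⟩)))
    · -- cv some i, cv some i'
      have : i ≠ i' := fun hii => hne (by rw [hii])
      exact Or.inr (Or.inr (Or.inr (Or.inl ⟨some i, some i', by simpa, rfl⟩)))

end Aux

section Aux2

variable {n t : ℕ} {C : Fin t → Finset (Finset (Fin n))}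

private lemma share_eq {V : Type*} {G : SimpleGraph V} {M : Set (Sym2 V)}
    (hM : MatchingEdges G M) {e f : Sym2 V} (he : e ∈ M) (hf : f ∈ M)
    {v : V} (hv : v ∈ e) (hv' : v ∈ f) : e = f := by
  by_contra h
  exact hM.2 e he f hf h v hv hv'

private lemma adj_center_interface (Sx : Σ S : {S // S ∈ allSets n t C}, {x : Fin n // x ∈ S.val}) :
    (CCGraph' n t C).Adj (wCV Sx.1) (wIV Sx) := by
  rw [CCGraph', SimpleGraph.fromRel_adj]
  exact ⟨by simp, Or.inl ⟨rfl, rfl⟩⟩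

private lemma counting (hn3 : 3 ∣ n)
    (h3 : ∀ i, ∀ s ∈ C i, s.card = 3)
    {M : Set (Sym2 (CCVert n t C))} (hM : InducedMatchingEdges (CCGraph' n t C) M)
    (hnoc : ∀ e ∈ M, ∀ o : Option (Fin t), cvV o ∉ e) :
    M.ncard ≤ n + (allSets n t C).card - n / 3 := by
  classical
  have hfin : M.Finite := Set.toFinite M
  set shape1 : Sym2 (CCVert n t C) → Prop := fun e =>
    ∃ Sx : Σ S : {S // S ∈ allSets n t C}, {x : Fin n // x ∈ S.val},
      e = s(Sum.inl Sx.2.val, wIV Sx) with hshape1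
  have hclass : ∀ e ∈ M, shape1 e ∨ ∃ S : {S // S ∈ allSets n t C}, wCV S ∈ e := by
    intro e he
    rcases edge_classify (hM.1.1 he) with h | ⟨S, i, j, hij, he'⟩ | ⟨Sx, he'⟩ | ⟨o, o', _, he'⟩
      | ⟨i, Sx, he'⟩
    · exact Or.inl h
    · refine Or.inr ⟨S, ?_⟩
      have h0 : i = 0 ∨ j = 0 := by
        have h1 := i.is_lt; have h2 := j.is_lt
        have h3 : i.val ≠ j.val := fun h => hij (Fin.ext h)
        rcases Nat.lt_or_ge i.val 1 with h | h
        · exact Or.inl (Fin.ext (by omega))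
        · exact Or.inr (Fin.ext (by omega))
      rw [he', Sym2.mem_iff]
      rcases h0 with h0 | h0 <;> [left; right] <;> rw [h0]
    · exact Or.inr ⟨Sx.1, by rw [he', Sym2.mem_iff]; left; rfl⟩
    · exact absurd (by rw [he']; exact Sym2.mem_mk_left _ _) (hnoc e he o)
    · exact absurd (by rw [he']; exact Sym2.mem_mk_left _ _) (hnoc e he (some i))
  set F : Finset (Sym2 (CCVert n t C)) := hfin.toFinset with hF
  have memF : ∀ e, e ∈ F ↔ e ∈ M := fun e => hfin.mem_toFinset
  set F1 : Finset (Sym2 (CCVert n t C)) := F.filter shape1 with hF1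
  set F2 : Finset (Sym2 (CCVert n t C)) := F.filter (fun e => ¬ shape1 e) with hF2
  have hsplit : F1.card + F2.card = F.card := Finset.card_filter_add_card_filter_not _
  have hncard : M.ncard = F.card := Set.ncard_eq_toFinset_card M hfin
  rcases (allSets n t C).eq_empty_or_nonempty with hS | ⟨S₀, hS₀⟩
  · have hMe : M = ∅ := by
      ext e
      simp only [Set.mem_empty_iff_false, iff_false]
      intro he
      rcases hclass e he with ⟨Sx, _⟩ | ⟨S, _⟩
      · exact Finset.eq_empty_iff_forall_notMem.mp hS _ Sx.1.2
      · exact Finset.eq_empty_iff_forall_notMem.mp hS _ S.2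
    simp [hMe]
  · -- default element
    obtain ⟨i₀, hi₀⟩ := Finset.mem_biUnion.mp hS₀
    have hcard₀ : S₀.card = 3 := h3 i₀ S₀ hi₀.2
    have hx₀ : S₀.Nonempty := Finset.card_pos.mp (by omega)
    obtain ⟨x₀, hx₀⟩ := hx₀
    set dflt : Σ S : {S // S ∈ allSets n t C}, {x : Fin n // x ∈ S.val} :=
      ⟨⟨S₀, hS₀⟩, ⟨x₀, hx₀⟩⟩ with hdflt
    set lOf : Sym2 (CCVert n t C) → Σ S : {S // S ∈ allSets n t C}, {x : Fin n // x ∈ S.val} :=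
      fun e => @dite _ (shape1 e) (Classical.propDecidable _) (fun h => h.choose) (fun _ => dflt) with hlOfdef
    have hlOf : ∀ e ∈ F1, e = s(Sum.inl (lOf e).2.val, wIV (lOf e)) := by
      intro e he
      have h1 : shape1 e := (Finset.mem_filter.mp he).2
      have hl : lOf e = h1.choose := by simp only [hlOfdef]; exact dif_pos h1
      rw [hl]
      exact h1.choose_spec
    set sOf : Sym2 (CCVert n t C) → {S // S ∈ allSets n t C} :=
      fun e => @dite _ (∃ S : {S // S ∈ allSets n t C}, wCV S ∈ e) (Classical.propDecidable _)
        (fun h => h.choose) (fun _ => ⟨S₀, hS₀⟩) with hsOfdef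
    have hsOf : ∀ e ∈ F2, wCV (sOf e) ∈ e := by
      intro e he
      obtain ⟨he', hns⟩ := Finset.mem_filter.mp he
      have h2 : ∃ S : {S // S ∈ allSets n t C}, wCV S ∈ e :=
        (hclass e ((memF e).mp he')).resolve_left hns
      have hs : sOf e = h2.choose := by simp only [hsOfdef]; exact dif_pos h2
      rw [hs]
      exact h2.choose_spec
    -- mem facts for F1 edges
    have hmemL : ∀ e ∈ F1, Sum.inl (lOf e).2.val ∈ e ∧ wIV (lOf e) ∈ e := by
      intro e he
      have hsp := hlOf e he
      generalize hq : lOf e = Sx at hsp ⊢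
      rw [hsp]
      exact ⟨Sym2.mem_mk_left _ _, Sym2.mem_mk_right _ _⟩
    -- F1 ≤ n
    have h1n : F1.card ≤ n := by
      have := Finset.card_le_card_of_injOn (fun e => (lOf e).2.val)
        (fun e _ => Finset.mem_univ ((lOf e).2.val)) (s := F1) (t := Finset.univ) ?_
      · simpa using this
      · intro e he f hf hef
        have hef2 : (lOf e).2.val = (lOf f).2.val := hef
        have h1 := (hmemL e he).1
        have h2 := (hmemL f hf).1
        rw [hef2] at h1
        exact share_eq hM.1 ((memF e).mp (Finset.mem_filter.mp he).1)
          ((memF f).mp (Finset.mem_filter.mp hf).1) h1 h2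
    set Lset : Finset {S // S ∈ allSets n t C} := F1.image (fun e => (lOf e).1) with hLset
    -- F1 ≤ 3 * Lset.card
    have h13 : F1.card ≤ 3 * Lset.card := by
      apply Finset.card_le_mul_card_image
      intro S hSmem
      obtain ⟨iS, hiS⟩ := Finset.mem_biUnion.mp S.2
      have hS3 : S.val.card = 3 := h3 iS S.val hiS.2
      rw [← hS3]
      apply Finset.card_le_card_of_injOn (fun e => (lOf e).2.val)
      · intro e he
        obtain ⟨he1, heS⟩ := Finset.mem_filter.mp he
        have heS' : (lOf e).1 = S := heS
        show (lOf e).2.val ∈ S.val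
        generalize hg : lOf e = Sx at heS' ⊢
        obtain ⟨S1, x1⟩ := Sx
        cases heS'
        exact x1.2
      · intro e he f hf hef
        have hef2 : (lOf e).2.val = (lOf f).2.val := hef
        have he1 := (Finset.mem_filter.mp he).1
        have hf1 := (Finset.mem_filter.mp hf).1
        have h1 := (hmemL e he1).1
        have h2 := (hmemL f hf1).1
        rw [hef2] at h1
        exact share_eq hM.1 ((memF e).mp (Finset.mem_filter.mp he1).1)
          ((memF f).mp (Finset.mem_filter.mp hf1).1) h1 h2
    -- F2 ≤ card allSets - Lset.card
    have h2b : F2.card ≤ (allSets n t C).card - Lset.card := by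
      have hsub : ∀ e ∈ F2, sOf e ∈ Finset.univ \ Lset := by
        intro e he
        rw [Finset.mem_sdiff]
        refine ⟨Finset.mem_univ _, ?_⟩
        intro hin
        obtain ⟨f, hf, hfe⟩ := Finset.mem_image.mp hin
        -- f ∈ F1 with star (lOf f).1 = sOf e
        have hwc : wCV (sOf e) ∈ e := hsOf e he
        have hwi : wIV (lOf f) ∈ f := (hmemL f hf).2
        have heM : e ∈ M := (memF e).mp (Finset.mem_filter.mp he).1
        have hfM : f ∈ M := (memF f).mp (Finset.mem_filter.mp hf).1
        have hadj : (CCGraph' n t C).Adj (wCV (sOf e)) (wIV (lOf f)) := by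
          rw [← hfe]; exact adj_center_interface (lOf f)
        have hg : s(wCV (sOf e), wIV (lOf f)) ∈ M :=
          hM.2 _ _ ⟨e, heM, hwc⟩ ⟨f, hfM, hwi⟩ hadj
        have hge : s(wCV (sOf e), wIV (lOf f)) = e :=
          share_eq hM.1 hg heM (Sym2.mem_mk_left _ _) hwc
        have hgf : s(wCV (sOf e), wIV (lOf f)) = f :=
          share_eq hM.1 hg hfM (Sym2.mem_mk_right _ _) hwi
        have hef : e = f := hge ▸ hgf
        have hns : ¬ shape1 e := (Finset.mem_filter.mp he).2
        have hs : shape1 f := (Finset.mem_filter.mp hf).2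
        rw [hef] at hns
        exact hns hs
      have hinj : Set.InjOn sOf F2 := by
        intro e he f hf hef
        have h1 := hsOf e he
        have h2 := hsOf f hf
        rw [hef] at h1
        exact share_eq hM.1 ((memF e).mp (Finset.mem_filter.mp he).1)
          ((memF f).mp (Finset.mem_filter.mp hf).1) h1 h2
      have := Finset.card_le_card_of_injOn sOf hsub hinj
      rwa [Finset.card_sdiff_of_subset (Finset.subset_univ _), Finset.card_univ,
        Fintype.card_coe] at this
    have hLle : Lset.card ≤ (allSets n t C).card := by
      have := Finset.card_le_univ Lset
      rwa [Fintype.card_coe] at this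
    obtain ⟨k, hk⟩ := hn3
    omega

end Aux2

private lemma adj_cvv {n t : ℕ} {C : Fin t → Finset (Finset (Fin n))}
    {o o' : Option (Fin t)} (h : o ≠ o') :
    (CCGraph' n t C).Adj (cvV o) (cvV o') := by
  rw [CCGraph', SimpleGraph.fromRel_adj]
  refine ⟨by simpa using h, Or.inl ?_⟩
  rcases o with _ | i' <;> rcases o' with _ | j' <;> trivial

private lemma adj_qv {n t : ℕ} {C : Fin t → Finset (Finset (Fin n))}
    {v : CCVert n t C} (h : (CCGraph' n t C).Adj (cvV none) v) :
    ∃ o', v = cvV o' := by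
  have he : s(cvV none, v) ∈ (CCGraph' n t C).edgeSet := ((CCGraph' n t C).mem_edgeSet).mpr h
  rcases edge_classify he with ⟨Sx, hq⟩ | ⟨S, i, j, hij, hq⟩ | ⟨Sx, hq⟩ | ⟨o1, o2, ho, hq⟩
    | ⟨i, Sx, hq⟩
  · have hm : (cvV none : CCVert n t C) ∈ s(Sum.inl Sx.2.val, wIV Sx) :=
      hq ▸ Sym2.mem_mk_left _ _
    simp [Sym2.mem_iff] at hm
  · have hm : (cvV none : CCVert n t C) ∈
        s(Sum.inr (Sum.inl (S, i)), Sum.inr (Sum.inl (S, j))) := hq ▸ Sym2.mem_mk_left _ _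
    simp [Sym2.mem_iff] at hm
  · have hm : (cvV none : CCVert n t C) ∈ s(wCV Sx.1, wIV Sx) := hq ▸ Sym2.mem_mk_left _ _
    simp [Sym2.mem_iff] at hm
  · have hm : v ∈ s(cvV o1, cvV o2) := hq ▸ Sym2.mem_mk_right _ _
    rw [Sym2.mem_iff] at hm
    rcases hm with hm | hm
    · exact ⟨o1, hm⟩
    · exact ⟨o2, hm⟩
  · have hm : (cvV none : CCVert n t C) ∈ s(cvV (some i), wIV Sx) :=
      hq ▸ Sym2.mem_mk_left _ _
    simp [Sym2.mem_iff] at hm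

/-- If the clique-variant cross-composition graph has an induced matching with at least
`k = n + |𝒞| - n/3 + 1` edges, then it has an induced matching with the same number of
edges that saturates the vertex `q`. -/
theorem clique_variant_saturating_q (n t m : ℕ) (hn3 : 3 ∣ n) (hn : 0 < n)
    (C : Fin t → Finset (Finset (Fin n)))
    (hm : ∀ i, (C i).card = m)
    (h3 : ∀ i, ∀ s ∈ C i, s.card = 3)
    (hne : ∀ i j : Fin t, i ≠ j → C i ≠ C j) :
    ∀ M : Set (Sym2 (CCVert n t C)), InducedMatchingEdges (CCGraph' n t C) M →
      n + (allSets n t C).card - n / 3 + 1 ≤ M.ncard →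
      ∃ M' : Set (Sym2 (CCVert n t C)), InducedMatchingEdges (CCGraph' n t C) M' ∧
        M'.ncard = M.ncard ∧
        (Sum.inr (Sum.inr (Sum.inr none)) : CCVert n t C) ∈ msat M' := by
  intro M hM hk
  by_cases hq : (cvV none : CCVert n t C) ∈ msat M
  · exact ⟨M, hM, rfl, hq⟩
  have hex : ∃ e ∈ M, ∃ o : Option (Fin t), cvV o ∈ e := by
    by_contra h
    push_neg at h
    have := counting hn3 h3 hM h
    omega
  obtain ⟨e, heM, o, hoe⟩ := hex
  have hoq : ∀ f ∈ M, (cvV none : CCVert n t C) ∉ f := fun f hf hin => hq ⟨f, hf, hin⟩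
  obtain ⟨i, rfl⟩ : ∃ i, o = some i := by
    cases o with
    | none => exact absurd hoe (hoq e heM)
    | some i => exact ⟨i, rfl⟩
  have huniq : ∀ f ∈ M, (∃ o', (cvV o' : CCVert n t C) ∈ f) → f = e := by
    rintro f hf ⟨o', ho'⟩
    by_cases h : o' = some i
    · subst h
      exact share_eq hM.1 hf heM ho' hoe
    · have hadj : (CCGraph' n t C).Adj (cvV o') (cvV (some i)) := adj_cvv h
      have hg : s(cvV o', cvV (some i)) ∈ M :=
        hM.2 _ _ ⟨f, hf, ho'⟩ ⟨e, heM, hoe⟩ hadj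
      have h1 := share_eq hM.1 hg hf (Sym2.mem_mk_left _ _) ho'
      have h2 := share_eq hM.1 hg heM (Sym2.mem_mk_right _ _) hoe
      rw [← h1, h2]
  set g0 : Sym2 (CCVert n t C) := s(cvV none, cvV (some i)) with hg0
  set M' : Set (Sym2 (CCVert n t C)) := insert g0 (M \ {e}) with hM'
  have hg0edge : g0 ∈ (CCGraph' n t C).edgeSet :=
    ((CCGraph' n t C).mem_edgeSet).mpr (adj_cvv (by simp))
  have hg0new : g0 ∉ M := fun h => hoq g0 h (Sym2.mem_mk_left _ _)
  have hside : ∀ f ∈ M, f ≠ e → ∀ o' : Option (Fin t), (cvV o' : CCVert n t C) ∉ f :=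
    fun f hf hfe o' hin => hfe (huniq f hf ⟨o', hin⟩)
  have hkill : ∀ w : CCVert n t C, (w = cvV none ∨ w = cvV (some i)) →
      ∀ f ∈ M, f ≠ e → ∀ x ∈ f, ¬ (CCGraph' n t C).Adj w x := by
    rintro w (rfl | rfl) f hf hfe x hx hadj
    · obtain ⟨o', rfl⟩ := adj_qv hadj
      exact hside f hf hfe o' hx
    · have hxM : x ∈ msat M := ⟨f, hf, hx⟩
      have hpM : (cvV (some i) : CCVert n t C) ∈ msat M := ⟨e, heM, hoe⟩
      have hg : s(cvV (some i), x) ∈ M := hM.2 _ _ hpM hxM hadj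
      have h1 := share_eq hM.1 hg heM (Sym2.mem_mk_left _ _) hoe
      have hxe : x ∈ e := h1 ▸ Sym2.mem_mk_right _ _
      exact hfe (share_eq hM.1 hf heM hx hxe)
  have hdecomp : ∀ w ∈ msat M', (w = (cvV none : CCVert n t C) ∨ w = cvV (some i)) ∨
      (∃ f, f ∈ M ∧ f ≠ e ∧ w ∈ f) := by
    rintro w ⟨f, hf, hwf⟩
    rcases Set.mem_insert_iff.mp hf with rfl | ⟨hfM, hfe⟩
    · exact Or.inl (Sym2.mem_iff.mp hwf)
    · exact Or.inr ⟨f, hfM, Set.mem_singleton_iff.not.mp hfe, hwf⟩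
  refine ⟨M', ⟨⟨?_, ?_⟩, ?_⟩, ?_, ⟨g0, Set.mem_insert _ _, Sym2.mem_mk_left _ _⟩⟩
  · -- subset of edges
    intro x hx
    rcases Set.mem_insert_iff.mp hx with rfl | ⟨hxM, _⟩
    · exact hg0edge
    · exact hM.1.1 hxM
  · -- pairwise disjoint
    intro e1 he1 e2 he2 hne12 v hv1 hv2
    rcases Set.mem_insert_iff.mp he1 with rfl | ⟨h1M, h1e⟩ <;>
      rcases Set.mem_insert_iff.mp he2 with rfl | ⟨h2M, h2e⟩
    · exact hne12 rfl
    · rcases Sym2.mem_iff.mp hv1 with rfl | rfl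
      · exact hside e2 h2M (Set.mem_singleton_iff.not.mp h2e) none hv2
      · exact hside e2 h2M (Set.mem_singleton_iff.not.mp h2e) (some i) hv2
    · rcases Sym2.mem_iff.mp hv2 with rfl | rfl
      · exact hside e1 h1M (Set.mem_singleton_iff.not.mp h1e) none hv1
      · exact hside e1 h1M (Set.mem_singleton_iff.not.mp h1e) (some i) hv1
    · exact hM.1.2 e1 h1M e2 h2M hne12 v hv1 hv2
  · -- induced
    intro u v hu hv hadj
    rcases hdecomp u hu with hu' | ⟨f, hf, hfe, huf⟩
    · rcases hdecomp v hv with hv' | ⟨g, hg, hge, hvg⟩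
      · rcases hu' with rfl | rfl <;> rcases hv' with rfl | rfl
        · exact absurd rfl hadj.ne
        · exact Set.mem_insert _ _
        · rw [Sym2.eq_swap]; exact Set.mem_insert _ _
        · exact absurd rfl hadj.ne
      · exact absurd hadj (hkill u hu' g hg hge v hvg)
    · rcases hdecomp v hv with hv' | ⟨g, hg, hge, hvg⟩
      · exact absurd hadj.symm (hkill v hv' f hf hfe u huf)
      · have hsM : s(u, v) ∈ M := hM.2 u v ⟨f, hf, huf⟩ ⟨g, hg, hvg⟩ hadj
        have hsne : s(u, v) ≠ e := by
          intro hse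
          have hue : u ∈ e := hse ▸ Sym2.mem_mk_left _ _
          exact hfe (share_eq hM.1 hf heM huf hue)
        exact Set.mem_insert_of_mem _ ⟨hsM, Set.mem_singleton_iff.not.mpr hsne⟩
  · -- cardinality
    have hfinM : M.Finite := Set.toFinite _
    have hd : (M \ {e}).ncard = M.ncard - 1 :=
      Set.ncard_diff_singleton_of_mem heM
    have hi : M'.ncard = (M \ {e}).ncard + 1 :=
      Set.ncard_insert_of_notMem (fun h => hg0new h.1) hfinM.diff
    have hpos : 0 < M.ncard := (Set.ncard_pos hfinM).mpr ⟨e, heM⟩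
    omega
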